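/- Let K be a kernel as above, α ∈ [0,1], and define g(α) = κ₀(α)κ₂(α) − κ₁(α)², where κ_j(α) = ∫_{-1}^{α} t^j K(t) dt. Then g is nondecreasing on [0,1]; specifically g'(α) = K(α)·(α²κ₀(α) + κ₂(α) − 2ακ₁(α)) = K(α)·∫_{-1}^{α}(α−t)²K(t)dt ≥ 0. -/

import Mathlib

open MeasureTheory intervalIntegral

/-- With `κ_j(α) = ∫_{-1}^{α} t^j K(t) dt`, the function
`g(α) = κ₀(α)κ₂(α) − κ₁(α)²` is nondecreasing on `[0,1]` with derivative
`g'(α) = K(α)·∫_{-1}^{α}(α−t)²K(t)dt`, which equals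
`K(α)·(α²κ₀(α) + κ₂(α) − 2ακ₁(α)) ≥ 0`. -/
theorem stmt_5 (K : ℝ → ℝ) (L : ℝ) (hL : 1 ≤ L)
    (hKlip : ∀ x y, |K x - K y| ≤ L * |x - y|)
    (hKnonneg : ∀ t, 0 ≤ K t)
    (hKsym : ∀ t, K t = K (-t))
    (hKsupp : ∀ t, t ∉ Set.Icc (-1 : ℝ) 1 → K t = 0)
    (hKint : ∫ t in Set.Icc (-1 : ℝ) 1, K t = 1)
    (hK1 : K 1 = 0) (hKm1 : K (-1) = 0) :
    let g : ℝ → ℝ := fun α =>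
      (∫ t in (-1 : ℝ)..α, K t) * (∫ t in (-1 : ℝ)..α, t ^ 2 * K t)
        - (∫ t in (-1 : ℝ)..α, t * K t) ^ 2
    MonotoneOn g (Set.Icc (0 : ℝ) 1) ∧
    ∀ α ∈ Set.Icc (0 : ℝ) 1,
      HasDerivAt g (K α * ∫ t in (-1 : ℝ)..α, (α - t) ^ 2 * K t) α ∧
      K α * (α ^ 2 * (∫ t in (-1 : ℝ)..α, K t) + (∫ t in (-1 : ℝ)..α, t ^ 2 * K t)
          - 2 * α * (∫ t in (-1 : ℝ)..α, t * K t))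
        = K α * ∫ t in (-1 : ℝ)..α, (α - t) ^ 2 * K t ∧
      0 ≤ K α * ∫ t in (-1 : ℝ)..α, (α - t) ^ 2 * K t := by
  intro g
  have hL0 : (0 : ℝ) ≤ L := le_trans zero_le_one hL
  have hKcont : Continuous K := by
    have : LipschitzWith (Real.toNNReal L) K := by
      apply LipschitzWith.of_dist_le_mul
      intro x y
      simpa [Real.dist_eq, Real.coe_toNNReal L hL0] using hKlip x y
    exact this.continuous
  have hc0 : Continuous K := hKcont
  have hc1 : Continuous (fun t : ℝ => t * K t) := continuous_id.mul hKcont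
  have hc2 : Continuous (fun t : ℝ => t ^ 2 * K t) := (continuous_pow 2).mul hKcont
  -- derivatives of the truncated moments
  have hd0 : ∀ α : ℝ, HasDerivAt (fun a => ∫ t in (-1 : ℝ)..a, K t) (K α) α := fun α =>
    intervalIntegral.integral_hasDerivAt_right (hc0.intervalIntegrable _ _)
      (hc0.stronglyMeasurableAtFilter _ _) hc0.continuousAt
  have hd1 : ∀ α : ℝ, HasDerivAt (fun a => ∫ t in (-1 : ℝ)..a, t * K t) (α * K α) α := fun α =>
    intervalIntegral.integral_hasDerivAt_right (hc1.intervalIntegrable _ _)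
      (hc1.stronglyMeasurableAtFilter _ _) hc1.continuousAt
  have hd2 : ∀ α : ℝ, HasDerivAt (fun a => ∫ t in (-1 : ℝ)..a, t ^ 2 * K t) (α ^ 2 * K α) α :=
    fun α =>
    intervalIntegral.integral_hasDerivAt_right (hc2.intervalIntegrable _ _)
      (hc2.stronglyMeasurableAtFilter _ _) hc2.continuousAt
  -- algebraic identity
  have hid : ∀ α : ℝ,
      (∫ t in (-1 : ℝ)..α, (α - t) ^ 2 * K t)
        = α ^ 2 * (∫ t in (-1 : ℝ)..α, K t) + (∫ t in (-1 : ℝ)..α, t ^ 2 * K t)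
          - 2 * α * (∫ t in (-1 : ℝ)..α, t * K t) := by
    intro α
    have : (∫ t in (-1 : ℝ)..α, (α - t) ^ 2 * K t)
        = ∫ t in (-1 : ℝ)..α, (α ^ 2 * K t + t ^ 2 * K t - 2 * α * (t * K t)) := by
      apply intervalIntegral.integral_congr
      intro t _
      ring
    rw [this, intervalIntegral.integral_sub, intervalIntegral.integral_add,
        intervalIntegral.integral_const_mul, intervalIntegral.integral_const_mul]
    · exact (hc0.intervalIntegrable _ _).const_mul _
    · exact hc2.intervalIntegrable _ _
    · exact ((hc0.intervalIntegrable _ _).const_mul _).add (hc2.intervalIntegrable _ _)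
    · exact (hc1.intervalIntegrable _ _).const_mul _
  -- derivative of g
  have hdg : ∀ α : ℝ, HasDerivAt g (K α * ∫ t in (-1 : ℝ)..α, (α - t) ^ 2 * K t) α := by
    intro α
    have h := (((hd0 α).mul (hd2 α)).sub ((hd1 α).pow 2))
    convert h using 1
    · rfl
    · rfl
    · rfl
    · rw [hid α]
      norm_num
      ring
  -- nonnegativity
  have hnn : ∀ α : ℝ, -1 ≤ α → 0 ≤ K α * ∫ t in (-1 : ℝ)..α, (α - t) ^ 2 * K t := by
    intro α hα
    apply mul_nonneg (hKnonneg α)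
    apply intervalIntegral.integral_nonneg hα
    intro t _
    exact mul_nonneg (sq_nonneg _) (hKnonneg t)
  refine ⟨?_, fun α hα => ⟨hdg α, by rw [hid α], hnn α (by linarith [hα.1])⟩⟩
  apply monotoneOn_of_deriv_nonneg (convex_Icc 0 1)
  · exact fun x _ => ((hdg x).differentiableAt).continuousAt.continuousWithinAt
  · exact fun x _ => ((hdg x).differentiableAt).differentiableWithinAt
  · intro x hx
    rw [(hdg x).deriv]
    have hx' : x ∈ Set.Icc (0:ℝ) 1 := interior_subset hx
    exact hnn x (by linarith [hx'.1])
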